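/- Let k ≥ 2 be an integer and let n ≥ 3k. Then the (k−1)-total bondage number of the wheel graph W_n equals k: b_t^{k−1}(W_n) = k. -/

import Mathlib

open SimpleGraph

/-- A set `S` of vertices is a total dominating set of `G` if every vertex of `G`
is adjacent to at least one vertex of `S`. -/
def IsTotalDominatingSet {V : Type*} (G : SimpleGraph V) (S : Set V) : Prop :=
  ∀ v : V, ∃ u ∈ S, G.Adj v u

/-- The total domination number of `G`: the minimum cardinality of a total
dominating set of `G`. -/
noncomputable def totalDominationNumber {V : Type*} (G : SimpleGraph V) : ℕ :=
  sInf {n : ℕ | ∃ S : Set V, S.ncard = n ∧ IsTotalDominatingSet G S}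

/-- A graph has no isolated vertices if every vertex has a neighbor. -/
def NoIsolatedVerts {V : Type*} (G : SimpleGraph V) : Prop :=
  ∀ v : V, ∃ u : V, G.Adj v u

/-- The `k`-total bondage number of `G`: the minimum cardinality of a set `F` of
edges of `G` such that `G − F` has no isolated vertices and the total domination
number of `G − F` is at least `γ_t(G) + k`. -/
noncomputable def kTotalBondage {V : Type*} (G : SimpleGraph V) (k : ℕ) : ℕ :=
  sInf {m : ℕ | ∃ F : Set (Sym2 V), F ⊆ G.edgeSet ∧ F.ncard = m ∧
    NoIsolatedVerts (G.deleteEdges F) ∧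
    totalDominationNumber G + k ≤ totalDominationNumber (G.deleteEdges F)}

/-- The wheel graph `W_n` on `n + 1` vertices: a hub vertex (`none`) joined to
every vertex of a cycle `C_n` (the vertices `some i`). -/
def wheelGraph (n : ℕ) : SimpleGraph (Option (Fin n)) :=
  SimpleGraph.fromRel (fun v w =>
    v = none ∨ ∃ i j : Fin n, v = some i ∧ w = some j ∧ (cycleGraph n).Adj i j)

lemma wheel_adj_none {n : ℕ} (x : Fin n) : (wheelGraph n).Adj none (some x) := by
  rw [wheelGraph, fromRel_adj]
  exact ⟨by simp, Or.inl (Or.inl rfl)⟩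

lemma wheel_adj_some {n : ℕ} {x y : Fin n} :
    (wheelGraph n).Adj (some x) (some y) ↔ (cycleGraph n).Adj x y := by
  rw [wheelGraph, fromRel_adj]
  constructor
  · rintro ⟨hne, h | h⟩
    · rcases h with h | ⟨i, j, hi, hj, hadj⟩
      · simp at h
      · rw [Option.some_inj] at hi hj; subst hi; subst hj; exact hadj
    · rcases h with h | ⟨i, j, hi, hj, hadj⟩
      · simp at h
      · rw [Option.some_inj] at hi hj; subst hi; subst hj; exact hadj.symm
  · intro h
    exact ⟨by simpa using h.ne, Or.inl (Or.inr ⟨x, y, rfl, rfl, h⟩)⟩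

lemma fin_sub_val {n : ℕ} (u v : Fin n) :
    ((u - v).val = (n - v.val + u.val) % n) := by
  rw [Fin.sub_def]

lemma cycle_adj_iff {n : ℕ} (hn : 2 ≤ n) (u v : Fin n) :
    (cycleGraph n).Adj u v ↔
      (u.val + 1 = v.val ∨ v.val + 1 = u.val ∨ (u.val = 0 ∧ v.val + 1 = n)
        ∨ (v.val = 0 ∧ u.val + 1 = n)) := by
  have hu := u.isLt
  have hv := v.isLt
  have h1 := fin_sub_val u v
  have h2 := fin_sub_val v u
  have e1 : (n - v.val + u.val) % n = if n - v.val + u.val < n then n - v.val + u.val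
      else n - v.val + u.val - n := by
    split
    · exact Nat.mod_eq_of_lt ‹_›
    · rw [Nat.mod_eq_sub_mod (by omega)]
      exact Nat.mod_eq_of_lt (by omega)
  have e2 : (n - u.val + v.val) % n = if n - u.val + v.val < n then n - u.val + v.val
      else n - u.val + v.val - n := by
    split
    · exact Nat.mod_eq_of_lt ‹_›
    · rw [Nat.mod_eq_sub_mod (by omega)]
      exact Nat.mod_eq_of_lt (by omega)
  rw [cycleGraph_adj', h1, h2, e1, e2]
  split <;> split <;> omega

lemma totalDominationNumber_le {V : Type*} {G : SimpleGraph V} {S : Set V}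
    (h : IsTotalDominatingSet G S) : totalDominationNumber G ≤ S.ncard :=
  Nat.sInf_le ⟨S, rfl, h⟩

lemma le_totalDominationNumber {V : Type*} {G : SimpleGraph V} {m : ℕ}
    (hne : ∃ S : Set V, IsTotalDominatingSet G S)
    (h : ∀ S : Set V, IsTotalDominatingSet G S → m ≤ S.ncard) :
    m ≤ totalDominationNumber G := by
  obtain ⟨S, hS⟩ := hne
  refine le_csInf ⟨S.ncard, S, rfl, hS⟩ ?_
  rintro b ⟨T, rfl, hT⟩
  exact h T hT

lemma two_le_ncard_tds {V : Type*} [Finite V] [Nonempty V] {G : SimpleGraph V} {S : Set V}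
    (h : IsTotalDominatingSet G S) : 2 ≤ S.ncard := by
  obtain ⟨u, hu, -⟩ := h (Classical.arbitrary V)
  obtain ⟨w, hw, hadj⟩ := h u
  have hne : u ≠ w := hadj.ne
  calc 2 = ({u, w} : Set V).ncard := (Set.ncard_pair hne).symm
  _ ≤ S.ncard := Set.ncard_le_ncard (by intro x hx; rcases hx with rfl | rfl; exacts [hu, hw]) S.toFinite

lemma tdn_wheel {n : ℕ} (hn : 1 ≤ n) : totalDominationNumber (wheelGraph n) = 2 := by
  haveI : NeZero n := ⟨by omega⟩
  have hmem : IsTotalDominatingSet (wheelGraph n) {none, some 0} := by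
    intro v
    match v with
    | none => exact ⟨some 0, by simp, wheel_adj_none 0⟩
    | some x => exact ⟨none, by simp, (wheel_adj_none x).symm⟩
  refine le_antisymm ?_ ?_
  · have := totalDominationNumber_le hmem
    rwa [Set.ncard_pair (by simp)] at this
  · exact le_totalDominationNumber ⟨_, hmem⟩ (fun S hS => two_le_ncard_tds hS)

lemma cycle_adj_pair {n : ℕ} (hn : 2 ≤ n) {x y o : Fin n} (ho : o.val = 1)
    (h : (cycleGraph n).Adj x y) : x = y + o ∨ x = y - o := by
  haveI : NeZero n := ⟨by omega⟩
  rw [cycleGraph_adj'] at h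
  rcases h with h | h
  · left
    have hxy : x - y = o := Fin.ext (by rw [ho]; exact h)
    rw [sub_eq_iff_eq_add] at hxy
    rw [hxy, add_comm]
  · right
    have hxy : y - x = o := Fin.ext (by rw [ho]; exact h)
    rw [sub_eq_iff_eq_add] at hxy
    rw [hxy, add_comm, add_sub_cancel_right]

lemma bondage_mem (k n : ℕ) (hk : 2 ≤ k) (hn : 3 * k ≤ n) :
    ∃ F : Set (Sym2 (Option (Fin n))), F ⊆ (wheelGraph n).edgeSet ∧ F.ncard = k ∧
      NoIsolatedVerts ((wheelGraph n).deleteEdges F) ∧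
      totalDominationNumber (wheelGraph n) + (k - 1) ≤
        totalDominationNumber ((wheelGraph n).deleteEdges F) := by
  have hn2 : 2 ≤ n := by omega
  set G := wheelGraph n with hG
  set vtx : Fin k → Fin n := fun i => ⟨3 * i.val + 1, by omega⟩ with hvtx
  set e : Fin k → Sym2 (Option (Fin n)) := fun i => s(none, some (vtx i)) with he
  -- membership characterizations
  have hmemF : ∀ x : Fin n, s((none : Option (Fin n)), some x) ∈ Set.range e ↔
      ∃ i : Fin k, 3 * i.val + 1 = x.val := by
    intro x
    constructor
    · rintro ⟨i, hi⟩
      simp only [he, Sym2.eq_iff] at hi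
      rcases hi with ⟨-, h⟩ | ⟨h, -⟩
      · exact ⟨i, congrArg Fin.val (Option.some_inj.1 h)⟩
      · simp at h
    · rintro ⟨i, hi⟩
      refine ⟨i, ?_⟩
      have hx : vtx i = x := Fin.ext hi
      simp only [he, hx]
  have hrim : ∀ x y : Fin n, s((some x : Option (Fin n)), some y) ∉ Set.range e := by
    rintro x y ⟨i, hi⟩
    simp only [he, Sym2.eq_iff] at hi
    rcases hi with ⟨h, -⟩ | ⟨h, -⟩ <;> simp at h
  have hsub : Set.range e ⊆ G.edgeSet := by
    rintro _ ⟨i, rfl⟩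
    exact (G.mem_edgeSet).2 (wheel_adj_none (vtx i))
  have hinj : Function.Injective e := by
    intro i j hij
    simp only [he, Sym2.eq_iff] at hij
    rcases hij with ⟨-, h⟩ | ⟨h, -⟩
    · have h2 : 3 * i.val + 1 = 3 * j.val + 1 := congrArg Fin.val (Option.some_inj.1 h)
      exact Fin.ext (by omega)
    · simp at h
  have hcard : (Set.range e).ncard = k := by
    rw [← Set.image_univ, Set.ncard_image_of_injective _ hinj, Set.ncard_univ,
      Nat.card_eq_fintype_card, Fintype.card_fin]
  have hiso : NoIsolatedVerts (G.deleteEdges (Set.range e)) := by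
    intro v
    match v with
    | none =>
      refine ⟨some ⟨0, by omega⟩, (deleteEdges_adj).2 ⟨wheel_adj_none _, ?_⟩⟩
      rw [hmemF]
      rintro ⟨i, hi⟩
      simp at hi
    | some x =>
      have hx := x.isLt
      rcases Nat.lt_or_ge (x.val + 1) n with h | h
      · refine ⟨some ⟨x.val + 1, h⟩, (deleteEdges_adj).2 ⟨wheel_adj_some.2 ?_, hrim _ _⟩⟩
        rw [cycle_adj_iff hn2]
        exact Or.inl rfl
      · refine ⟨some ⟨0, by omega⟩, (deleteEdges_adj).2 ⟨wheel_adj_some.2 ?_, hrim _ _⟩⟩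
        rw [cycle_adj_iff hn2]
        exact Or.inr (Or.inr (Or.inr ⟨rfl, by omega⟩))
  refine ⟨Set.range e, hsub, hcard, hiso, ?_⟩
  rw [tdn_wheel (by omega : 1 ≤ n), show 2 + (k - 1) = k + 1 by omega]
  refine le_totalDominationNumber ⟨Set.univ, fun v => ?_⟩ ?_
  · obtain ⟨u, hu⟩ := hiso v
    exact ⟨u, Set.mem_univ u, hu⟩
  · intro S hS
    by_contra hcon
    push_neg at hcon
    have hSk : S.ncard ≤ k := by omega
    -- each detached vertex forces a private rim neighbor in S
    have key : ∀ i : Fin k, ∃ c : Fin n, some c ∈ S ∧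
        (cycleGraph n).Adj (c) (vtx i) ∧ (c.val = 3 * i.val ∨ c.val = 3 * i.val + 2) := by
      intro i
      obtain ⟨u, huS, hadj⟩ := hS (some (vtx i))
      rw [deleteEdges_adj] at hadj
      match u with
      | none =>
        exfalso
        apply hadj.2
        rw [Sym2.eq_swap, hmemF]
        exact ⟨i, rfl⟩
      | some c =>
        have hcyc : (cycleGraph n).Adj (vtx i) c := wheel_adj_some.1 hadj.1
        refine ⟨c, huS, hcyc.symm, ?_⟩
        rw [cycle_adj_iff hn2] at hcyc
        have hv : (vtx i).val = 3 * i.val + 1 := rfl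
        have hik : i.val < k := i.isLt
        have hc := c.isLt
        omega
    choose c hcS hcadj hcval using key
    set rep : Fin k → Option (Fin n) := fun i => some (c i) with hrep
    have hrinj : Function.Injective rep := by
      intro i j hij
      have h2 : (c i).val = (c j).val := congrArg Fin.val (Option.some_inj.1 hij)
      have := hcval i
      have := hcval j
      exact Fin.ext (by omega)
    have hrsub : Set.range rep ⊆ S := by rintro _ ⟨i, rfl⟩; exact hcS i
    have hrcard : (Set.range rep).ncard = k := by
      rw [← Set.image_univ, Set.ncard_image_of_injective _ hrinj, Set.ncard_univ,
        Nat.card_eq_fintype_card, Fintype.card_fin]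
    have hSeq : Set.range rep = S :=
      Set.eq_of_subset_of_ncard_le hrsub (by omega) S.toFinite
    -- every rim vertex has a cycle-neighbor among the c i
    have hw : ∀ x : Fin n, ∃ i : Fin k, (cycleGraph n).Adj x (c i) := by
      intro x
      obtain ⟨u, huS, hadj⟩ := hS (some x)
      rw [← hSeq] at huS
      obtain ⟨i, hi⟩ := huS
      refine ⟨i, ?_⟩
      rw [deleteEdges_adj] at hadj
      rw [hrep] at hi
      rw [← hi] at hadj
      exact wheel_adj_some.1 hadj.1
    choose w hwadj using hw
    haveI : NeZero n := ⟨by omega⟩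
    set o : Fin n := ⟨1, by omega⟩ with ho
    have hcount : (Finset.univ : Finset (Fin n)).card =
        ∑ i : Fin k, (Finset.univ.filter (fun x => w x = i)).card :=
      Finset.card_eq_sum_card_fiberwise (fun x _ => Finset.mem_univ (w x))
    have hfib : ∀ i : Fin k, (Finset.univ.filter (fun x => w x = i)).card ≤ 2 := by
      intro i
      have hsub2 : (Finset.univ.filter (fun x => w x = i)) ⊆ {c i + o, c i - o} := by
        intro x hx
        rw [Finset.mem_filter] at hx
        have := hwadj x
        rw [hx.2] at this
        rcases cycle_adj_pair (o := o) hn2 rfl this with h | h <;> simp [h]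
      calc (Finset.univ.filter (fun x => w x = i)).card ≤ ({c i + o, c i - o} : Finset (Fin n)).card :=
            Finset.card_le_card hsub2
        _ ≤ 2 := Finset.card_insert_le _ _ |>.trans (by simp)
    have hnk : n ≤ 2 * k := by
      have : (Finset.univ : Finset (Fin n)).card ≤ ∑ _i : Fin k, 2 :=
        hcount.le.trans (Finset.sum_le_sum (fun i _ => hfib i))
      simpa [Finset.card_univ, mul_comm] using this
    omega

lemma bondage_lb {k n m : ℕ} (hk : 2 ≤ k) (hn : 3 * k ≤ n)
    (F : Set (Sym2 (Option (Fin n)))) (hFcard : F.ncard = m)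
    (hFiso : NoIsolatedVerts ((wheelGraph n).deleteEdges F))
    (hFdom : totalDominationNumber (wheelGraph n) + (k - 1) ≤
      totalDominationNumber ((wheelGraph n).deleteEdges F)) :
    k ≤ m := by
  have hn2 : 2 ≤ n := by omega
  haveI : NeZero n := ⟨by omega⟩
  set G := wheelGraph n with hG
  by_contra hcon
  push_neg at hcon
  have hmk : m ≤ k - 1 := by omega
  rw [tdn_wheel (by omega : 1 ≤ n), show 2 + (k - 1) = k + 1 by omega] at hFdom
  -- it suffices to build a total dominating set of G - F of size ≤ k
  suffices hγ : totalDominationNumber (G.deleteEdges F) ≤ k by omega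
  set D : Set (Fin n) := {d | s((none : Option (Fin n)), some d) ∈ F} with hD
  have hspoke_inj : Function.Injective (fun d : Fin n => s((none : Option (Fin n)), some d)) := by
    intro a b hab
    simp only [Sym2.eq_iff] at hab
    rcases hab with ⟨-, h⟩ | ⟨h, -⟩
    · exact Option.some_inj.1 h
    · simp at h
  have hDm : D.ncard ≤ m := by
    have hsub : (fun d : Fin n => s((none : Option (Fin n)), some d)) '' D ⊆ F := by
      rintro _ ⟨d, hd, rfl⟩; exact hd
    calc D.ncard = ((fun d : Fin n => s((none : Option (Fin n)), some d)) '' D).ncard :=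
          (Set.ncard_image_of_injective _ hspoke_inj).symm
      _ ≤ F.ncard := Set.ncard_le_ncard hsub (Set.toFinite F)
      _ = m := hFcard
  -- each detached vertex has a rim neighbor in G - F
  have hadjD : ∀ d ∈ D, ∃ c : Fin n, (G.deleteEdges F).Adj (some d) (some c) := by
    intro d hd
    obtain ⟨u, hu⟩ := hFiso (some d)
    match u with
    | none =>
      exfalso
      have h2 := (deleteEdges_adj.1 hu).2
      rw [Sym2.eq_swap] at h2
      exact h2 hd
    | some c => exact ⟨c, hu⟩
  choose! cfun hcfun using hadjD
  -- generic construction of a total dominating set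
  have buildS : ∀ (g : Fin n → Fin n) (p : Fin n), p ∉ D →
      (∀ d ∈ D, (G.deleteEdges F).Adj (some d) (some (g d))) →
      IsTotalDominatingSet (G.deleteEdges F)
        (insert none (insert (some p) (Option.some '' (g '' D)))) := by
    intro g p hp hg v
    match v with
    | none =>
      refine ⟨some p, by simp, deleteEdges_adj.2 ⟨wheel_adj_none p, hp⟩⟩
    | some x =>
      by_cases hx : x ∈ D
      · exact ⟨some (g x), by right; right; exact ⟨g x, ⟨x, hx, rfl⟩, rfl⟩, hg x hx⟩
      · exact ⟨none, by simp, (deleteEdges_adj.2 ⟨wheel_adj_none x, hx⟩).symm⟩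
  have sizeS : ∀ (g : Fin n → Fin n) (p : Fin n),
      (insert (none : Option (Fin n)) (insert (some p) (Option.some '' (g '' D)))).ncard ≤
        2 + D.ncard := by
    intro g p
    calc (insert (none : Option (Fin n)) (insert (some p) (Option.some '' (g '' D)))).ncard
        ≤ (insert (some p) (Option.some '' (g '' D))).ncard + 1 := Set.ncard_insert_le _ _
      _ ≤ (Option.some '' (g '' D)).ncard + 1 + 1 := by
          have := Set.ncard_insert_le (some p) (Option.some '' (g '' D)); omega
      _ ≤ D.ncard + 2 := by
          have h1 := Set.ncard_image_le (s := g '' D) (f := Option.some) (Set.toFinite _)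
          have h2 := Set.ncard_image_le (s := D) (f := g) (Set.toFinite _)
          omega
      _ = 2 + D.ncard := by omega
  by_cases hcase : ∃ d ∈ D, ∃ c' : Fin n, (G.deleteEdges F).Adj (some d) (some c') ∧ c' ∉ D
  · -- some detached vertex has a non-detached neighbor
    obtain ⟨d₀, hd₀, c₀, hadj₀, hc₀⟩ := hcase
    set g : Fin n → Fin n := fun d => if d = d₀ then c₀ else cfun d with hgdef
    have hg : ∀ d ∈ D, (G.deleteEdges F).Adj (some d) (some (g d)) := by
      intro d hd
      by_cases hdd : d = d₀
      · subst hdd; simp only [hgdef, if_pos rfl]; exact hadj₀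
      · simp only [hgdef, if_neg hdd]; exact hcfun d hd
    have habs : insert (some c₀) (Option.some '' (g '' D)) = Option.some '' (g '' D) :=
      Set.insert_eq_self.2 ⟨c₀, ⟨d₀, hd₀, by simp [hgdef]⟩, rfl⟩
    have htds := buildS g c₀ hc₀ hg
    have hle := totalDominationNumber_le htds
    rw [habs] at hle
    have hsz : (insert (none : Option (Fin n)) (Option.some '' (g '' D))).ncard ≤ 1 + D.ncard := by
      have h0 := Set.ncard_insert_le (none : Option (Fin n)) (Option.some '' (g '' D))
      have h1 := Set.ncard_image_le (s := g '' D) (f := Option.some) (Set.toFinite _)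
      have h2 := Set.ncard_image_le (s := D) (f := g) (Set.toFinite _)
      omega
    omega
  · push_neg at hcase
    -- find a vertex outside D
    have hpex : ∃ p : Fin n, p ∉ D := by
      by_contra hall
      push_neg at hall
      have : D = Set.univ := Set.eq_univ_of_forall hall
      rw [this, Set.ncard_univ, Nat.card_eq_fintype_card, Fintype.card_fin] at hDm
      omega
    obtain ⟨p, hp⟩ := hpex
    by_cases hDe : D = ∅
    · have htds := buildS cfun p hp (by intro d hd; rw [hDe] at hd; exact absurd hd (Set.notMem_empty d))
      have hle := totalDominationNumber_le htds
      have hsz := sizeS cfun p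
      have hD0 : D.ncard = 0 := by rw [hDe]; exact Set.ncard_empty _
      omega
    · -- D nonempty: find a boundary vertex j ∈ D with j + 1 ∉ D
      obtain ⟨d₁, hd₁⟩ := Set.nonempty_iff_ne_empty.2 hDe
      set o : Fin n := ⟨1, by omega⟩ with ho
      have hbd : ∃ j ∈ D, j + o ∉ D := by
        by_contra hcl
        push_neg at hcl
        have hstep : ∀ t : ℕ, (⟨(d₁.val + t) % n, Nat.mod_lt _ (by omega)⟩ : Fin n) ∈ D := by
          intro t
          induction t with
          | zero =>
            have : (⟨(d₁.val + 0) % n, Nat.mod_lt _ (by omega)⟩ : Fin n) = d₁ :=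
              Fin.ext (by simp [Nat.mod_eq_of_lt d₁.isLt])
            rw [this]; exact hd₁
          | succ t ih =>
            have h2 := hcl _ ih
            have heq : (⟨(d₁.val + t) % n, Nat.mod_lt _ (by omega)⟩ : Fin n) + o =
                ⟨(d₁.val + (t + 1)) % n, Nat.mod_lt _ (by omega)⟩ := by
              rw [Fin.add_def]
              exact Fin.ext (by simp [Nat.mod_add_mod, ← Nat.add_assoc]; rfl)
            rwa [heq] at h2
        apply hp
        have h3 := hstep (n + p.val - d₁.val)
        have heq2 : (⟨(d₁.val + (n + p.val - d₁.val)) % n, Nat.mod_lt _ (by omega)⟩ : Fin n) = p := by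
          apply Fin.ext
          have hd1n := d₁.isLt
          have hpn := p.isLt
          have : d₁.val + (n + p.val - d₁.val) = n + p.val := by omega
          rw [this]
          show (n + p.val) % n = p.val
          rw [Nat.add_mod_left]
          exact Nat.mod_eq_of_lt hpn
        rwa [heq2] at h3
      obtain ⟨j, hj, hjo⟩ := hbd
      have he₀ : s((some j : Option (Fin n)), some (j + o)) ∈ F := by
        by_contra hne
        refine hjo (hcase j hj _ (deleteEdges_adj.2 ⟨wheel_adj_some.2 ?_, hne⟩))
        rw [cycleGraph_adj']
        right
        rw [add_sub_cancel_left]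
      have hm1 : 1 ≤ m := by
        rw [← hFcard]
        exact Set.ncard_pos (Set.toFinite F) |>.2 ⟨_, he₀⟩
      have hDm1 : D.ncard ≤ m - 1 := by
        have hsub : (fun d : Fin n => s((none : Option (Fin n)), some d)) '' D ⊆ F \ {s((some j : Option (Fin n)), some (j + o))} := by
          rintro _ ⟨d, hd, rfl⟩
          refine ⟨hd, ?_⟩
          simp only [Set.mem_singleton_iff, Sym2.eq_iff]
          rintro (⟨h, -⟩ | ⟨h, -⟩) <;> simp at h
        calc D.ncard = ((fun d : Fin n => s((none : Option (Fin n)), some d)) '' D).ncard :=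
              (Set.ncard_image_of_injective _ hspoke_inj).symm
          _ ≤ (F \ {s((some j : Option (Fin n)), some (j + o))}).ncard :=
              Set.ncard_le_ncard hsub (Set.toFinite _)
          _ = m - 1 := by rw [Set.ncard_diff_singleton_of_mem he₀, hFcard]
      have htds := buildS cfun p hp hcfun
      have hle := totalDominationNumber_le htds
      have hsz := sizeS cfun p
      omega


/-- For `k ≥ 2` and `n ≥ 3k`, the `(k−1)`-total bondage number of the wheel
graph `W_n` equals `k`. -/
theorem kTotalBondage_wheelGraph (k n : ℕ) (hk : 2 ≤ k) (hn : 3 * k ≤ n) :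
    kTotalBondage (wheelGraph n) (k - 1) = k := by
  obtain ⟨F, h1, h2, h3, h4⟩ := bondage_mem k n hk hn
  rw [kTotalBondage]
  refine le_antisymm (Nat.sInf_le ⟨F, h1, h2, h3, h4⟩) ?_
  refine le_csInf ⟨k, F, h1, h2, h3, h4⟩ ?_
  rintro b ⟨F', hsub', hcard', hiso', hdom'⟩
  exact bondage_lb hk hn F' hcard' hiso' hdom'
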